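/- Let c ∈ ℝᵐ and B ∈ ℝ^{q×m} be fixed, let A : ℝⁿ → ℝ^q be continuous, and let the lower level data be f(x,y) = cᵀy and g(x,y) = A(x) + By, so that S(x) = argmin_y { cᵀy | A(x) + By ≤ 0 }. If (x̄,ȳ) ∈ ℝⁿ×ℝᵐ is a local minimizer of (BPP), then (BPP) is partially calm at (x̄,ȳ). -/

import Mathlib

namespace PCAux
attribute [local instance] Classical.propDecidable
noncomputable section

lemma oneD_core {ι : Type} [Fintype ι] (α c : ι → ℝ) (t₀ y v D : ℝ)
    (ht₀ : ∀ i, α i * t₀ ≤ c i) (hres : ∀ i, α i * y ≤ c i + v) (hv : 0 ≤ v) (hD : 0 ≤ D)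
    (hDi : ∀ i, α i ≠ 0 → 1 ≤ D * |α i|)
    (i₀ : ι) (hi₀ : ¬ α i₀ * y ≤ c i₀) (hpos : ∀ i, ¬ α i * y ≤ c i → 0 < α i) :
    ∃ t, (∀ i, α i * t ≤ c i) ∧ |t - y| ≤ D * v := by
  classical
  set V : Finset ι := Finset.univ.filter (fun i => ¬ α i * y ≤ c i) with hV
  have hi₀V : i₀ ∈ V := by simp only [hV, Finset.mem_filter, Finset.mem_univ, true_and]; exact hi₀
  set S : Finset ℝ := V.image (fun i => c i / α i) with hS
  have hSne : S.Nonempty := ⟨_, Finset.mem_image_of_mem _ hi₀V⟩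
  set t : ℝ := S.min' hSne with htdef
  obtain ⟨i₁, hi₁V, hti⟩ : ∃ i ∈ V, c i / α i = t :=
    Finset.mem_image.mp (S.min'_mem hSne)
  have hi₁viol : ¬ α i₁ * y ≤ c i₁ := (Finset.mem_filter.mp hi₁V).2
  have hα₁ : 0 < α i₁ := hpos i₁ hi₁viol
  have hαt : α i₁ * t = c i₁ := by
    rw [← hti]; field_simp
  have hty : t < y := by
    have h1 : c i₁ < α i₁ * y := lt_of_not_ge hi₁viol
    rw [← hαt] at h1
    exact lt_of_mul_lt_mul_left h1 hα₁.le
  have ht₀t : t₀ ≤ t := by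
    have h1 : α i₁ * t₀ ≤ α i₁ * t := by rw [hαt]; exact ht₀ i₁
    exact le_of_mul_le_mul_left h1 hα₁
  refine ⟨t, fun i => ?_, ?_⟩
  · rcases lt_trichotomy (α i) 0 with hneg | hzero | hposi
    · nlinarith [ht₀ i]
    · simpa [hzero] using ht₀ i
    · by_cases hiV : ¬ α i * y ≤ c i
      · have hmem : c i / α i ∈ S := Finset.mem_image_of_mem _ (by simp only [hV, Finset.mem_filter, Finset.mem_univ, true_and]; first | exact hiV | exact lt_of_not_ge hiV)
        have h1 : t ≤ c i / α i := S.min'_le _ hmem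
        calc α i * t ≤ α i * (c i / α i) := by
              exact mul_le_mul_of_nonneg_left h1 hposi.le
          _ = c i := by field_simp
      · push_neg at hiV
        nlinarith
  · have h1 : α i₁ * (y - t) ≤ v := by
      have := hres i₁
      nlinarith [hαt]
    have h2 : 1 ≤ D * α i₁ := by
      have := hDi i₁ hα₁.ne'
      rwa [abs_of_pos hα₁] at this
    have h3 : 0 ≤ y - t := by linarith
    have h4 : y - t ≤ D * v := by nlinarith [mul_le_mul_of_nonneg_left h1 hD]
    rw [abs_sub_comm, abs_of_nonneg h3]
    exact h4

lemma oneD {ι : Type} [Fintype ι] (α c : ι → ℝ) (t₀ y v D : ℝ)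
    (ht₀ : ∀ i, α i * t₀ ≤ c i) (hres : ∀ i, α i * y ≤ c i + v) (hv : 0 ≤ v) (hD : 0 ≤ D)
    (hDi : ∀ i, α i ≠ 0 → 1 ≤ D * |α i|) :
    ∃ t, (∀ i, α i * t ≤ c i) ∧ |t - y| ≤ D * v := by
  by_cases hy : ∀ i, α i * y ≤ c i
  · exact ⟨y, hy, by simpa using mul_nonneg hD hv⟩
  push_neg at hy
  obtain ⟨i₀, hi₀⟩ := hy
  have hi₀' : ¬ α i₀ * y ≤ c i₀ := not_le.mpr hi₀
  have hα0 : ∀ i, ¬ α i * y ≤ c i → α i ≠ 0 := by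
    intro i hi h0
    exact hi (by simpa [h0] using (by simpa [h0] using ht₀ i : (0:ℝ) ≤ c i))
  have key : ∀ i j, ¬ α i * y ≤ c i → ¬ α j * y ≤ c j → 0 < α i → ¬ α j < 0 := by
    intro i j hi hj hαi hαj
    have h1 : t₀ < y := by
      have := ht₀ i
      have := lt_of_not_ge hi
      nlinarith
    have h2 : y < t₀ := by
      have := ht₀ j
      have := lt_of_not_ge hj
      nlinarith
    linarith
  rcases (hα0 i₀ hi₀').lt_or_gt with hneg | hposi
  · -- all violated have α < 0 ; mirror through negation
    have hpos' : ∀ i, ¬ (-α i) * (-y) ≤ c i → 0 < -α i := by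
      intro i hi
      have hi2 : ¬ α i * y ≤ c i := by
        intro h; exact hi (by nlinarith)
      rcases (hα0 i hi2).lt_or_gt with h | h
      · linarith
      · exact absurd hneg (key i i₀ hi2 hi₀' h)
    have hi₀'' : ¬ (-α i₀) * (-y) ≤ c i₀ := by
      intro h; exact hi₀' (by nlinarith)
    obtain ⟨t', ht'1, ht'2⟩ := oneD_core (fun i => -α i) c (-t₀) (-y) v D
      (fun i => by simpa using ht₀ i) (fun i => by simpa using hres i) hv hD
      (fun i hi => by simpa using hDi i (by simpa using hi)) i₀ hi₀'' hpos'
    refine ⟨-t', fun i => by simpa using ht'1 i, ?_⟩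
    calc |-t' - y| = |t' - -y| := by rw [← abs_neg]; ring_nf
      _ ≤ D * v := ht'2
  · have hpos : ∀ i, ¬ α i * y ≤ c i → 0 < α i := by
      intro i hi
      rcases (hα0 i hi).lt_or_gt with h | h
      · exact absurd h (key i₀ i hi₀' hi hposi)
      · exact h
    exact oneD_core α c t₀ y v D ht₀ hres hv hD hDi i₀ hi₀' hpos


def dotp {k : ℕ} (a y : Fin k → ℝ) : ℝ := ∑ j, a j * y j

variable {k : ℕ} {ι : Type} [Fintype ι]

def EIdx (M : ι → Fin (k+1) → ℝ) : Type :=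
  {i : ι // M i (Fin.last k) = 0} ⊕
    ({i : ι // 0 < M i (Fin.last k)} × {i : ι // M i (Fin.last k) < 0})

instance (M : ι → Fin (k+1) → ℝ) : Fintype (EIdx M) := by
  unfold EIdx; infer_instance

def EM (M : ι → Fin (k+1) → ℝ) : EIdx M → Fin k → ℝ
  | Sum.inl i => Fin.init (M i.1)
  | Sum.inr (i, j) => fun t =>
      (-(M j.1 (Fin.last k))) * Fin.init (M i.1) t + (M i.1 (Fin.last k)) * Fin.init (M j.1) t

def Eb (M : ι → Fin (k+1) → ℝ) (b : ι → ℝ) : EIdx M → ℝ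
  | Sum.inl i => b i.1
  | Sum.inr (i, j) => (-(M j.1 (Fin.last k))) * b i.1 + (M i.1 (Fin.last k)) * b j.1

def CC (M : ι → Fin (k+1) → ℝ) : ℝ := 1 + ∑ i, |M i (Fin.last k)|
def DD (M : ι → Fin (k+1) → ℝ) : ℝ :=
  ∑ i, if M i (Fin.last k) = 0 then 0 else |M i (Fin.last k)|⁻¹
def NN (M : ι → Fin (k+1) → ℝ) : ℝ := ∑ i, ∑ t, |Fin.init (M i) t|

lemma CC_ge_one (M : ι → Fin (k+1) → ℝ) : 1 ≤ CC M := by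
  have : (0:ℝ) ≤ ∑ i, |M i (Fin.last k)| :=
    Finset.sum_nonneg fun i _ => abs_nonneg _
  simp [CC]; linarith

lemma DD_nonneg (M : ι → Fin (k+1) → ℝ) : 0 ≤ DD M :=
  Finset.sum_nonneg fun i _ => by positivity

lemma NN_nonneg (M : ι → Fin (k+1) → ℝ) : 0 ≤ NN M :=
  Finset.sum_nonneg fun i _ => Finset.sum_nonneg fun t _ => abs_nonneg _

lemma NN_row (M : ι → Fin (k+1) → ℝ) (i : ι) : (∑ t, |Fin.init (M i) t|) ≤ NN M := by
  have := Finset.single_le_sum (f := fun i => ∑ t, |Fin.init (M i) t|)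
    (fun i _ => Finset.sum_nonneg fun t _ => abs_nonneg _) (Finset.mem_univ i)
  exact this

lemma DD_spec (M : ι → Fin (k+1) → ℝ) (i : ι) (h : M i (Fin.last k) ≠ 0) :
    1 ≤ DD M * |M i (Fin.last k)| := by
  have h1 : |M i (Fin.last k)|⁻¹ ≤ DD M := by
    have := Finset.single_le_sum
      (f := fun i => if M i (Fin.last k) = 0 then 0 else |M i (Fin.last k)|⁻¹)
      (fun i _ => by positivity) (Finset.mem_univ i)
    simpa [h, DD] using this
  have h2 : (0:ℝ) < |M i (Fin.last k)| := abs_pos.mpr h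
  calc (1:ℝ) = |M i (Fin.last k)|⁻¹ * |M i (Fin.last k)| := by field_simp
    _ ≤ DD M * |M i (Fin.last k)| := mul_le_mul_of_nonneg_right h1 h2.le

lemma CC_pair (M : ι → Fin (k+1) → ℝ) (i j : ι) (hi : 0 < M i (Fin.last k))
    (hj : M j (Fin.last k) < 0) : (-(M j (Fin.last k))) + M i (Fin.last k) ≤ CC M := by
  have hij : i ≠ j := fun h => by rw [h] at hi; linarith
  have h1 : |M i (Fin.last k)| + |M j (Fin.last k)| ≤ ∑ t, |M t (Fin.last k)| := by
    have := Finset.add_sum_erase (Finset.univ) (fun t => |M t (Fin.last k)|) (Finset.mem_univ i)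
    have h2 : |M j (Fin.last k)| ≤ ∑ t ∈ Finset.univ.erase i, |M t (Fin.last k)| :=
      Finset.single_le_sum (f := fun t => |M t (Fin.last k)|)
        (fun t _ => abs_nonneg _) (Finset.mem_erase.mpr ⟨hij.symm, Finset.mem_univ j⟩)
    linarith
  rw [abs_of_pos hi, abs_of_neg hj] at h1
  have := CC_ge_one M
  simp only [CC] at *
  linarith

lemma dotp_eq_init (a y : Fin (k+1) → ℝ) :
    dotp a y = dotp (Fin.init a) (Fin.init y) + a (Fin.last k) * y (Fin.last k) := by
  simp [dotp, Fin.sum_univ_castSucc, Fin.init]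

lemma dotp_snoc (a : Fin (k+1) → ℝ) (z : Fin k → ℝ) (t : ℝ) :
    dotp a (Fin.snoc z t) = dotp (Fin.init a) z + a (Fin.last k) * t := by
  simp [dotp, Fin.sum_univ_castSucc, Fin.init]

lemma dotp_comb (lam mu : ℝ) (f g y : Fin k → ℝ) :
    dotp (fun t => lam * f t + mu * g t) y = lam * dotp f y + mu * dotp g y := by
  simp only [dotp, Finset.mul_sum, ← Finset.sum_add_distrib]
  exact Finset.sum_congr rfl fun t _ => by ring

lemma forward (M : ι → Fin (k+1) → ℝ) (b : ι → ℝ) (y : Fin (k+1) → ℝ) (r : ℝ) (hr : 0 ≤ r)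
    (h : ∀ i, dotp (M i) y ≤ b i + r) :
    ∀ e, dotp (EM M e) (Fin.init y) ≤ Eb M b e + CC M * r := by
  rintro (⟨i, hi⟩ | ⟨⟨i, hi⟩, ⟨j, hj⟩⟩)
  · have h1 := h i
    rw [dotp_eq_init (M i) y] at h1
    have hC := mul_le_mul_of_nonneg_right (CC_ge_one M) hr
    rw [hi] at h1
    simp only [EM, Eb]
    nlinarith
  · have h1 := h i
    have h2 := h j
    rw [dotp_eq_init (M i) y] at h1
    rw [dotp_eq_init (M j) y] at h2
    simp only [EM, Eb]
    rw [dotp_comb]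
    have hpair := CC_pair M i j hi hj
    have e1 := mul_le_mul_of_nonneg_left h1 (by linarith : (0:ℝ) ≤ -(M j (Fin.last k)))
    have e2 := mul_le_mul_of_nonneg_left h2 (le_of_lt hi)
    have e3 := mul_le_mul_of_nonneg_right hpair hr
    nlinarith [e1, e2, e3]

lemma abs_dotp_sub_le {k : ℕ} (a y z : Fin k → ℝ) (ρ : ℝ) (h : ∀ j, |y j - z j| ≤ ρ) :
    |dotp a y - dotp a z| ≤ (∑ j, |a j|) * ρ := by
  have h1 : dotp a y - dotp a z = ∑ j, a j * (y j - z j) := by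
    simp [dotp, Finset.sum_sub_distrib, mul_sub]
  rw [h1, Finset.sum_mul]
  refine (Finset.abs_sum_le_sum_abs _ _).trans (Finset.sum_le_sum fun j _ => ?_)
  rw [abs_mul]
  exact mul_le_mul_of_nonneg_left (h j) (abs_nonneg _)

lemma cross_div {a b p q : ℝ} (hp : 0 < p) (hq : q < 0) (h : 0 ≤ (-q) * a + p * b) :
    b / q ≤ a / p := by
  have hp' : p ≠ 0 := ne_of_gt hp
  have hq' : q ≠ 0 := ne_of_lt hq
  have key : a / p - b / q = ((-q) * a + p * b) / (p * (-q)) := by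
    field_simp
    ring
  have h2 : 0 ≤ ((-q) * a + p * b) / (p * (-q)) :=
    div_nonneg h (mul_pos hp (neg_pos.mpr hq)).le
  linarith [key ▸ h2]

lemma extend (M : ι → Fin (k+1) → ℝ) (b : ι → ℝ) (y : Fin (k+1) → ℝ) (r ρ : ℝ)
    (hr : 0 ≤ r) (hρ : 0 ≤ ρ) (z' : Fin k → ℝ)
    (hz' : ∀ e, dotp (EM M e) z' ≤ Eb M b e)
    (hy : ∀ i, dotp (M i) y ≤ b i + r)
    (hρb : ∀ j, |z' j - Fin.init y j| ≤ ρ) :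
    ∃ t : ℝ, (∀ i, dotp (M i) (Fin.snoc z' t) ≤ b i) ∧
      |t - y (Fin.last k)| ≤ DD M * (r + NN M * ρ) := by
  classical
  set α : ι → ℝ := fun i => M i (Fin.last k) with hα
  set cc : ι → ℝ := fun i => b i - dotp (Fin.init (M i)) z' with hcc
  -- residual bound for the 1-D system
  have hres : ∀ i, α i * y (Fin.last k) ≤ cc i + (r + NN M * ρ) := by
    intro i
    have h1 := hy i
    rw [dotp_eq_init (M i) y] at h1
    have h2 : |dotp (Fin.init (M i)) z' - dotp (Fin.init (M i)) (Fin.init y)| ≤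
        (∑ t, |Fin.init (M i) t|) * ρ := abs_dotp_sub_le _ _ _ _ hρb
    have h3 : (∑ t, |Fin.init (M i) t|) * ρ ≤ NN M * ρ :=
      mul_le_mul_of_nonneg_right (NN_row M i) hρ
    have h4 := abs_le.mp (h2.trans h3)
    simp only [hα, hcc]
    linarith [h4.1, h4.2]
  -- zero rows
  have hzero : ∀ i, α i = 0 → 0 ≤ cc i := by
    intro i h0
    have := hz' (Sum.inl ⟨i, h0⟩)
    simp only [EM, Eb] at this
    simp only [hcc]
    linarith
  -- cross inequality
  have hcross : ∀ i j, 0 < α i → α j < 0 → cc j / α j ≤ cc i / α i := by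
    intro i j hi hj
    have h1 := hz' (Sum.inr (⟨i, hi⟩, ⟨j, hj⟩))
    simp only [EM, Eb] at h1
    rw [dotp_comb] at h1
    refine cross_div hi hj ?_
    simp only [hα, hcc]
    nlinarith [h1]
  -- a feasible point t₀ for the 1-D system
  have hne : ∃ t₀, ∀ i, α i * t₀ ≤ cc i := by
    set upF : Finset ι := Finset.univ.filter (fun i => 0 < α i) with hupF
    set loF : Finset ι := Finset.univ.filter (fun i => α i < 0) with hloF
    have hupmem : ∀ i, 0 < α i → i ∈ upF := fun i h => by
      simp only [hupF, Finset.mem_filter, Finset.mem_univ, true_and]; exact h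
    have hlomem : ∀ i, α i < 0 → i ∈ loF := fun i h => by
      simp only [hloF, Finset.mem_filter, Finset.mem_univ, true_and]; exact h
    by_cases hup : upF.Nonempty
    · have hne' : (upF.image fun i => cc i / α i).Nonempty := hup.image _
      set t₀ := (upF.image fun i => cc i / α i).min' hne' with ht₀def
      obtain ⟨i₁, hi₁, hti₁⟩ := Finset.mem_image.mp ((upF.image fun i => cc i / α i).min'_mem hne')
      have hα₁ : 0 < α i₁ := (Finset.mem_filter.mp hi₁).2
      refine ⟨t₀, fun i => ?_⟩
      rcases lt_trichotomy (α i) 0 with hneg | hz | hpos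
      · have h1 : cc i / α i ≤ cc i₁ / α i₁ := hcross i₁ i hα₁ hneg
        rw [hti₁] at h1
        have h2 : α i * t₀ ≤ α i * (cc i / α i) := mul_le_mul_of_nonpos_left h1 hneg.le
        calc α i * t₀ ≤ α i * (cc i / α i) := h2
          _ = cc i := by
              have h0 : α i ≠ 0 := by first | exact ne_of_lt hneg | exact ne_of_gt hpos
              field_simp
      · rw [hz, zero_mul]; exact hzero i hz
      · have h1 : t₀ ≤ cc i / α i :=
          (upF.image fun i => cc i / α i).min'_le _ (Finset.mem_image_of_mem _ (hupmem i hpos))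
        calc α i * t₀ ≤ α i * (cc i / α i) := mul_le_mul_of_nonneg_left h1 hpos.le
          _ = cc i := by
              have h0 : α i ≠ 0 := by first | exact ne_of_lt hneg | exact ne_of_gt hpos
              field_simp
    · by_cases hlo : loF.Nonempty
      · have hne' : (loF.image fun i => cc i / α i).Nonempty := hlo.image _
        set t₀ := (loF.image fun i => cc i / α i).max' hne' with ht₀def
        refine ⟨t₀, fun i => ?_⟩
        rcases lt_trichotomy (α i) 0 with hneg | hz | hpos
        · have h1 : cc i / α i ≤ t₀ :=
            (loF.image fun i => cc i / α i).le_max' _ (Finset.mem_image_of_mem _ (hlomem i hneg))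
          calc α i * t₀ ≤ α i * (cc i / α i) := mul_le_mul_of_nonpos_left h1 hneg.le
            _ = cc i := by
              have h0 : α i ≠ 0 := by first | exact ne_of_lt hneg | exact ne_of_gt hpos
              field_simp
        · rw [hz, zero_mul]; exact hzero i hz
        · exact absurd (hupmem i hpos) (by simpa [Finset.not_nonempty_iff_eq_empty.mp hup])
      · refine ⟨0, fun i => ?_⟩
        rcases lt_trichotomy (α i) 0 with hneg | hz | hpos
        · exact absurd (hlomem i hneg) (by simpa [Finset.not_nonempty_iff_eq_empty.mp hlo])
        · rw [hz, zero_mul]; exact hzero i hz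
        · exact absurd (hupmem i hpos) (by simpa [Finset.not_nonempty_iff_eq_empty.mp hup])
  obtain ⟨t₀, ht₀⟩ := hne
  obtain ⟨t, ht1, ht2⟩ := oneD α cc t₀ (y (Fin.last k)) (r + NN M * ρ) (DD M) ht₀ hres
    (by nlinarith [NN_nonneg M]) (DD_nonneg M) (fun i hi => DD_spec M i hi)
  refine ⟨t, fun i => ?_, ht2⟩
  rw [dotp_snoc]
  have := ht1 i
  simp only [hα, hcc] at this
  linarith

end

theorem hoffman : ∀ (k : ℕ) {ι : Type} [Fintype ι] (M : ι → Fin k → ℝ),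
    ∃ K : ℝ, 0 < K ∧ ∀ (b : ι → ℝ) (r : ℝ) (y : Fin k → ℝ), 0 ≤ r →
      (∃ z, ∀ i, dotp (M i) z ≤ b i) → (∀ i, dotp (M i) y ≤ b i + r) →
      ∃ z, (∀ i, dotp (M i) z ≤ b i) ∧ ∀ j, |z j - y j| ≤ K * r := by
  intro k
  induction k with
  | zero =>
    intro ι _ M
    exact ⟨1, one_pos, fun b r y hr ⟨z, hz⟩ _ => ⟨z, hz, fun j => j.elim0⟩⟩
  | succ k ih =>
    intro ι _ M
    obtain ⟨K', hK', H'⟩ := ih (EM M)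
    have hC1 : (1:ℝ) ≤ CC M := CC_ge_one M
    have hC0 : (0:ℝ) ≤ CC M := le_trans zero_le_one hC1
    have hD0 : (0:ℝ) ≤ DD M := DD_nonneg M
    have hN0 : (0:ℝ) ≤ NN M := NN_nonneg M
    have c1 : 0 ≤ K' * CC M := mul_nonneg hK'.le hC0
    have c2 : 0 ≤ NN M * (K' * CC M) := mul_nonneg hN0 c1
    have c3 : 0 ≤ DD M * (1 + NN M * (K' * CC M)) := mul_nonneg hD0 (by linarith)
    refine ⟨DD M * (1 + NN M * (K' * CC M)) + K' * CC M + 1, by linarith, ?_⟩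
    rintro b r y hr ⟨z₀, hz₀⟩ hres
    have hfeas' : ∀ e, dotp (EM M e) (Fin.init z₀) ≤ Eb M b e := by
      intro e
      have h := forward M b z₀ 0 le_rfl (fun i => by simpa using hz₀ i) e
      simpa using h
    have hres' : ∀ e, dotp (EM M e) (Fin.init y) ≤ Eb M b e + CC M * r :=
      forward M b y r hr hres
    obtain ⟨z', hz'sat, hz'close⟩ := H' (Eb M b) (CC M * r) (Fin.init y)
      (mul_nonneg hC0 hr) ⟨Fin.init z₀, hfeas'⟩ hres'
    obtain ⟨t, htsat, htb⟩ := extend M b y r (K' * (CC M * r)) hr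
      (mul_nonneg hK'.le (mul_nonneg hC0 hr)) z' hz'sat hres hz'close
    refine ⟨Fin.snoc z' t, htsat, ?_⟩
    intro j
    refine Fin.lastCases ?_ ?_ j
    · rw [Fin.snoc_last]
      have h1 : DD M * (r + NN M * (K' * (CC M * r)))
          = (DD M * (1 + NN M * (K' * CC M))) * r := by ring
      have h2 : (DD M * (1 + NN M * (K' * CC M))) * r
          ≤ (DD M * (1 + NN M * (K' * CC M)) + K' * CC M + 1) * r := by
        apply mul_le_mul_of_nonneg_right _ hr
        linarith
      calc |t - y (Fin.last k)| ≤ DD M * (r + NN M * (K' * (CC M * r))) := htb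
        _ ≤ _ := by rw [h1]; exact h2
    · intro j'
      rw [Fin.snoc_castSucc]
      have h1 : |z' j' - y j'.castSucc| ≤ K' * (CC M * r) := hz'close j'
      have h2 : K' * (CC M * r) = (K' * CC M) * r := by ring
      have h3 : (K' * CC M) * r ≤ (DD M * (1 + NN M * (K' * CC M)) + K' * CC M + 1) * r := by
        apply mul_le_mul_of_nonneg_right _ hr
        linarith
      calc |z' j' - y j'.castSucc| ≤ K' * (CC M * r) := h1
        _ ≤ _ := by rw [h2]; exact h3

theorem proj0_closed : ∀ (k : ℕ) {ι : Type} [Fintype ι] (M : ι → Fin (k+1) → ℝ) (b : ι → ℝ),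
    IsClosed {t : ℝ | ∃ x : Fin (k+1) → ℝ, x 0 = t ∧ ∀ i, dotp (M i) x ≤ b i} := by
  intro k
  induction k with
  | zero =>
    intro ι _ M b
    have hset : {t : ℝ | ∃ x : Fin 1 → ℝ, x 0 = t ∧ ∀ i, dotp (M i) x ≤ b i}
        = ⋂ i, {t : ℝ | M i 0 * t ≤ b i} := by
      ext t
      simp only [Set.mem_setOf_eq, Set.mem_iInter]
      constructor
      · rintro ⟨x, hx0, hx⟩ i
        have := hx i
        rw [dotp] at this
        simpa [Fin.sum_univ_one, hx0] using this
      · intro h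
        refine ⟨fun _ => t, rfl, fun i => ?_⟩
        rw [dotp]
        simpa [Fin.sum_univ_one] using h i
    rw [hset]
    exact isClosed_iInter fun i => isClosed_le (by continuity) (by continuity)
  | succ k ih =>
    intro ι _ M b
    have hset : {t : ℝ | ∃ x : Fin (k+2) → ℝ, x 0 = t ∧ ∀ i, dotp (M i) x ≤ b i}
        = {t : ℝ | ∃ x' : Fin (k+1) → ℝ, x' 0 = t ∧ ∀ e, dotp (EM M e) x' ≤ Eb M b e} := by
      ext t
      simp only [Set.mem_setOf_eq]
      constructor
      · rintro ⟨x, hx0, hx⟩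
        refine ⟨Fin.init x, ?_, ?_⟩
        · show x (Fin.castSucc 0) = t
          rwa [Fin.castSucc_zero]
        · intro e
          have h := forward M b x 0 le_rfl (fun i => by simpa using hx i) e
          simpa using h
      · rintro ⟨z', hz0, hz⟩
        set y : Fin (k+2) → ℝ := Fin.snoc z' 0 with hy
        set r : ℝ := ∑ i, max (dotp (M i) y - b i) 0 with hrdef
        have hr : 0 ≤ r := Finset.sum_nonneg fun i _ => le_max_right _ _
        have hres : ∀ i, dotp (M i) y ≤ b i + r := by
          intro i
          have h1 : dotp (M i) y - b i ≤ max (dotp (M i) y - b i) 0 := le_max_left _ _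
          have h2 : max (dotp (M i) y - b i) 0 ≤ r :=
            Finset.single_le_sum (f := fun i => max (dotp (M i) y - b i) 0)
              (fun i _ => le_max_right _ _) (Finset.mem_univ i)
          linarith
        have hρb : ∀ j, |z' j - Fin.init y j| ≤ 0 := by
          intro j
          have : Fin.init y j = z' j := by simp [hy, Fin.init_snoc]
          simp [this]
        obtain ⟨t', ht'sat, _⟩ := extend M b y r 0 hr le_rfl z' hz hres hρb
        refine ⟨Fin.snoc z' t', ?_, ht'sat⟩
        show (Fin.snoc z' t' : Fin (k+2) → ℝ) 0 = t
        rw [show (0 : Fin (k+2)) = Fin.castSucc (0 : Fin (k+1)) by simp, Fin.snoc_castSucc]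
        exact hz0
    rw [hset]
    exact ih (EM M) (Eb M b)

theorem lp_attain {m : ℕ} {ι : Type} [Fintype ι] (M : ι → Fin m → ℝ) (b : ι → ℝ)
    (c : Fin m → ℝ)
    (hfeas : ∃ y, ∀ i, dotp (M i) y ≤ b i)
    (β : ℝ) (hβ : ∀ y, (∀ i, dotp (M i) y ≤ b i) → β ≤ dotp c y) :
    ∃ y, (∀ i, dotp (M i) y ≤ b i) ∧ ∀ z, (∀ i, dotp (M i) z ≤ b i) → dotp c y ≤ dotp c z := by
  classical
  set M' : (ι ⊕ Unit) → Fin (m+1) → ℝ :=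
    Sum.elim (fun i => Fin.cons 0 (M i)) (fun _ => Fin.cons (-1) c) with hM'
  set b' : (ι ⊕ Unit) → ℝ := Sum.elim b (fun _ => 0) with hb'
  have hdot : ∀ (qq : ℝ) (f : Fin m → ℝ) (x : Fin (m+1) → ℝ),
      dotp (Fin.cons qq f) x = qq * x 0 + dotp f (Fin.tail x) := by
    intro qq f x
    rw [dotp, Fin.sum_univ_succ]
    simp [dotp, Fin.tail]
  have hchar : ∀ t : ℝ, (∃ x : Fin (m+1) → ℝ, x 0 = t ∧ ∀ i', dotp (M' i') x ≤ b' i')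
      ↔ ∃ y : Fin m → ℝ, (∀ i, dotp (M i) y ≤ b i) ∧ dotp c y ≤ t := by
    intro t
    constructor
    · rintro ⟨x, hx0, hx⟩
      refine ⟨Fin.tail x, fun i => ?_, ?_⟩
      · have := hx (Sum.inl i)
        rw [hM'] at this
        simpa [hdot, hb'] using this
      · have := hx (Sum.inr ())
        rw [hM'] at this
        simp only [Sum.elim_inr] at this
        rw [hdot] at this
        simp only [hb', Sum.elim_inr] at this
        rw [hx0] at this
        linarith
    · rintro ⟨y, hy, hyt⟩
      refine ⟨Fin.cons t y, Fin.cons_zero _ _, ?_⟩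
      rintro (i | u)
      · rw [hM']
        simp only [Sum.elim_inl]
        rw [hdot]
        simp only [Fin.cons_zero, Fin.tail_cons, hb', Sum.elim_inl]
        simpa using hy i
      · rw [hM']
        simp only [Sum.elim_inr]
        rw [hdot]
        simp only [Fin.cons_zero, Fin.tail_cons, hb', Sum.elim_inr]
        linarith
  set T : Set ℝ := {t : ℝ | ∃ x : Fin (m+1) → ℝ, x 0 = t ∧ ∀ i', dotp (M' i') x ≤ b' i'} with hT
  have hTclosed : IsClosed T := proj0_closed m M' b'
  obtain ⟨y₀, hy₀⟩ := hfeas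
  have hTne : T.Nonempty := ⟨dotp c y₀, (hchar _).mpr ⟨y₀, hy₀, le_rfl⟩⟩
  have hTbdd : BddBelow T := by
    refine ⟨β, fun t ht => ?_⟩
    obtain ⟨y, hy, hyt⟩ := (hchar t).mp ht
    exact le_trans (hβ y hy) hyt
  have hmem : sInf T ∈ T := hTclosed.csInf_mem hTne hTbdd
  obtain ⟨y, hy, hyt⟩ := (hchar _).mp hmem
  refine ⟨y, hy, fun z hz => ?_⟩
  have hz' : dotp c z ∈ T := (hchar _).mpr ⟨z, hz, le_rfl⟩
  exact le_trans hyt (csInf_le hTbdd hz')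

end PCAux



open Filter Topology
open scoped ENNReal NNReal

/-- Optimal value function `φ(x) = inf { f(x,y) | g(x,y) ≤ 0 }`, an extended real. -/
noncomputable def phi {n m q : ℕ} (f : (Fin n → ℝ) → (Fin m → ℝ) → ℝ)
    (g : (Fin n → ℝ) → (Fin m → ℝ) → Fin q → ℝ) (x : Fin n → ℝ) : EReal :=
  sInf {v : EReal | ∃ y : Fin m → ℝ, (∀ i, g x y i ≤ 0) ∧ v = ((f x y : ℝ) : EReal)}

/-- Lower level solution set `S(x) = argmin_y { f(x,y) | g(x,y) ≤ 0 }`. -/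
def Sol {n m q : ℕ} (f : (Fin n → ℝ) → (Fin m → ℝ) → ℝ)
    (g : (Fin n → ℝ) → (Fin m → ℝ) → Fin q → ℝ) (x : Fin n → ℝ) : Set (Fin m → ℝ) :=
  {y | (∀ i, g x y i ≤ 0) ∧ ∀ z, (∀ i, g x z i ≤ 0) → f x y ≤ f x z}

/-- `(x̄,ȳ)` is a local minimizer of (BPP). -/
def IsLocalMinBPP {n m q : ℕ} (F : (Fin n → ℝ) → (Fin m → ℝ) → ℝ)
    (X : Set (Fin n → ℝ)) (f : (Fin n → ℝ) → (Fin m → ℝ) → ℝ)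
    (g : (Fin n → ℝ) → (Fin m → ℝ) → Fin q → ℝ)
    (xb : Fin n → ℝ) (yb : Fin m → ℝ) : Prop :=
  xb ∈ X ∧ yb ∈ Sol f g xb ∧
    ∃ ε : ℝ, 0 < ε ∧ ∀ x y, dist x xb < ε → dist y yb < ε → x ∈ X → y ∈ Sol f g x →
      F xb yb ≤ F x y

/-- (BPP) is partially calm at `(x̄,ȳ)`. -/
def PartiallyCalm {n m q : ℕ} (F : (Fin n → ℝ) → (Fin m → ℝ) → ℝ)
    (X : Set (Fin n → ℝ)) (f : (Fin n → ℝ) → (Fin m → ℝ) → ℝ)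
    (g : (Fin n → ℝ) → (Fin m → ℝ) → Fin q → ℝ)
    (xb : Fin n → ℝ) (yb : Fin m → ℝ) : Prop :=
  ∃ δ : ℝ, 0 < δ ∧ ∃ κ : ℝ, 0 < κ ∧ ∀ (x : Fin n → ℝ) (y : Fin m → ℝ) (u : ℝ),
    dist x xb ≤ δ → dist y yb ≤ δ → |u| ≤ δ → x ∈ X →
    ((f x y : ℝ) : EReal) - phi f g x ≤ ((u : ℝ) : EReal) → (∀ i, g x y i ≤ 0) →
    F xb yb ≤ F x y + κ * |u|

/-- Theorem 4.1: if the lower level problem is a linear program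
`min_y { cᵀy | A(x) + By ≤ 0 }` with fixed `c`, `B` and continuous right-hand side
perturbation `A`, then (BPP) is partially calm at any of its local minimizers. -/

theorem partial_calmness_fully_linear_lower_level {n m q : ℕ}
    (F : (Fin n → ℝ) → (Fin m → ℝ) → ℝ) (X : Set (Fin n → ℝ))
    (c : Fin m → ℝ) (B : Fin q → Fin m → ℝ) (A : (Fin n → ℝ) → Fin q → ℝ)
    (hF : LocallyLipschitz fun p : (Fin n → ℝ) × (Fin m → ℝ) => F p.1 p.2)
    (hXne : X.Nonempty) (hXcl : IsClosed X)
    (hA : Continuous A)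
    (xb : Fin n → ℝ) (yb : Fin m → ℝ)
    (hmin : IsLocalMinBPP F X (fun _ y => ∑ j, c j * y j)
      (fun x y i => A x i + ∑ j, B i j * y j) xb yb) :
    PartiallyCalm F X (fun _ y => ∑ j, c j * y j)
      (fun x y i => A x i + ∑ j, B i j * y j) xb yb := by
  classical
  obtain ⟨hxbX, hybSol, ε, hε, hloc⟩ := hmin
  obtain ⟨KF, U, hU, hlip⟩ := hF (xb, yb)
  rw [Metric.mem_nhds_iff] at hU
  obtain ⟨η, hη, hball⟩ := hU
  obtain ⟨KH, hKH, Hoff⟩ := PCAux.hoffman m (Sum.elim B (fun _ : Unit => c))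
  set δ : ℝ := min ε η / (2 * (1 + KH)) with hδdef
  have hmin0 : 0 < min ε η := lt_min hε hη
  have h2KH : (0:ℝ) < 2 * (1 + KH) := by linarith
  have hδpos : 0 < δ := div_pos hmin0 h2KH
  have hδhalf : δ ≤ min ε η / 2 := by
    apply div_le_div_of_nonneg_left hmin0.le two_pos
    linarith
  have hhalflt : min ε η / 2 < min ε η := half_lt_self hmin0
  refine ⟨δ, hδpos, (KF : ℝ) * KH + 1, by positivity, ?_⟩
  intro x y u hdx hdy hdu hxX hphi hgfeas
  -- feasibility of y in matrix form
  have hyfeas : ∀ i, PCAux.dotp (B i) y ≤ -A x i := by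
    intro i
    have h := hgfeas i
    simp only at h
    rw [PCAux.dotp]
    linarith
  -- the value function at x
  have hφle : phi (fun _ y => ∑ j, c j * y j)
      (fun x y i => A x i + ∑ j, B i j * y j) x ≤ ((∑ j, c j * y j : ℝ) : EReal) :=
    sInf_le ⟨y, hgfeas, rfl⟩
  have hφnetop : phi (fun _ y => ∑ j, c j * y j)
      (fun x y i => A x i + ∑ j, B i j * y j) x ≠ ⊤ :=
    (lt_of_le_of_lt hφle (EReal.coe_lt_top _)).ne
  by_cases hbot : phi (fun _ y => ∑ j, c j * y j)
      (fun x y i => A x i + ∑ j, B i j * y j) x = ⊥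
  · rw [hbot, EReal.coe_sub_bot] at hphi
    exact absurd (top_le_iff.mp hphi) (EReal.coe_lt_top u).ne
  obtain ⟨φr, hφr⟩ : ∃ φr : ℝ, phi (fun _ y => ∑ j, c j * y j)
      (fun x y i => A x i + ∑ j, B i j * y j) x = (φr : EReal) :=
    ⟨_, (EReal.coe_toReal hφnetop hbot).symm⟩
  have hφlow : ∀ z : Fin m → ℝ, (∀ i, A x i + ∑ j, B i j * z j ≤ 0) →
      φr ≤ ∑ j, c j * z j := by
    intro z hz
    have h1 : phi (fun _ y => ∑ j, c j * y j)
        (fun x y i => A x i + ∑ j, B i j * y j) x ≤ ((∑ j, c j * z j : ℝ) : EReal) :=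
      sInf_le ⟨z, hz, rfl⟩
    rw [hφr] at h1
    exact EReal.coe_le_coe_iff.mp h1
  have hyφ : φr ≤ ∑ j, c j * y j := hφlow y hgfeas
  have hu' : (∑ j, c j * y j) - φr ≤ u := by
    rw [hφr, ← EReal.coe_sub] at hphi
    exact EReal.coe_le_coe_iff.mp hphi
  have hu0 : 0 ≤ u := by linarith
  have habs : |u| = u := abs_of_nonneg hu0
  have hudelta : u ≤ δ := by rw [← habs]; exact hdu
  -- attainment of the lower-level minimum at x
  obtain ⟨y₀, hy₀feas, hy₀min⟩ := PCAux.lp_attain B (fun i => -A x i) c ⟨y, hyfeas⟩ φr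
    (fun z hz => hφlow z (fun i => by
      have h : ∑ j, B i j * z j ≤ -A x i := hz i
      linarith))
  have hy₀φ : PCAux.dotp c y₀ ≤ φr := by
    have h1 : ((PCAux.dotp c y₀ : ℝ) : EReal) ≤ phi (fun _ y => ∑ j, c j * y j)
        (fun x y i => A x i + ∑ j, B i j * y j) x := by
      apply le_sInf
      rintro v ⟨z, hz, rfl⟩
      have := hy₀min z (fun i => by have := hz i; simp only at this; rw [PCAux.dotp]; linarith)
      exact_mod_cast this
    rw [hφr] at h1
    exact EReal.coe_le_coe_iff.mp h1
  -- Hoffman's error bound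
  set bb : (Fin q ⊕ Unit) → ℝ := Sum.elim (fun i => -A x i) (fun _ => φr) with hbb
  have hbfeas : ∃ z, ∀ i', PCAux.dotp (Sum.elim B (fun _ : Unit => c) i') z ≤ bb i' := by
    refine ⟨y₀, ?_⟩
    rintro (i | u')
    · exact hy₀feas i
    · exact hy₀φ
  have hbres : ∀ i', PCAux.dotp (Sum.elim B (fun _ : Unit => c) i') y ≤ bb i' + u := by
    rintro (i | u')
    · have := hyfeas i
      simp only [Sum.elim_inl, hbb]
      linarith
    · simp only [Sum.elim_inr, hbb]
      show PCAux.dotp c y ≤ φr + u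
      rw [PCAux.dotp]
      linarith
  obtain ⟨z, hzsat, hzclose⟩ := Hoff bb u y hu0 hbfeas hbres
  -- z solves the lower level problem at x
  have hzSol : z ∈ Sol (fun _ y => ∑ j, c j * y j)
      (fun x y i => A x i + ∑ j, B i j * y j) x := by
    constructor
    · intro i
      have := hzsat (Sum.inl i)
      simp only [Sum.elim_inl, hbb] at this
      rw [PCAux.dotp] at this
      simp only
      linarith
    · intro w hw
      have h1 := hzsat (Sum.inr ())
      simp only [Sum.elim_inr, hbb] at h1
      rw [PCAux.dotp] at h1
      have h2 : φr ≤ ∑ j, c j * w j := hφlow w hw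
      simp only
      linarith
  -- distance estimates
  have hdzy : dist z y ≤ KH * u := by
    rw [dist_pi_le_iff (mul_nonneg hKH.le hu0)]
    intro j
    rw [Real.dist_eq]
    exact hzclose j
  have hKuδ : KH * u ≤ KH * δ := mul_le_mul_of_nonneg_left hudelta hKH.le
  have hsum : KH * δ + δ = min ε η / 2 := by
    rw [hδdef]
    field_simp
    ring
  have hdzyb : dist z yb ≤ min ε η / 2 := by
    calc dist z yb ≤ dist z y + dist y yb := dist_triangle z y yb
      _ ≤ KH * u + δ := add_le_add hdzy hdy
      _ ≤ KH * δ + δ := by linarith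
      _ = min ε η / 2 := hsum
  have hδltmin : δ < min ε η := lt_of_le_of_lt hδhalf hhalflt
  -- local optimality
  have hF1 : F xb yb ≤ F x z := by
    apply hloc x z _ _ hxX hzSol
    · exact lt_of_le_of_lt hdx (lt_of_lt_of_le hδltmin (min_le_left _ _))
    · exact lt_of_le_of_lt hdzyb (lt_of_lt_of_le hhalflt (min_le_left _ _))
  -- Lipschitz estimate
  have hmem1 : ((x, z) : (Fin n → ℝ) × (Fin m → ℝ)) ∈ U := by
    apply hball
    rw [Metric.mem_ball, Prod.dist_eq]
    apply max_lt
    · exact lt_of_le_of_lt hdx (lt_of_lt_of_le hδltmin (min_le_right _ _))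
    · exact lt_of_le_of_lt hdzyb (lt_of_lt_of_le hhalflt (min_le_right _ _))
  have hmem2 : ((x, y) : (Fin n → ℝ) × (Fin m → ℝ)) ∈ U := by
    apply hball
    rw [Metric.mem_ball, Prod.dist_eq]
    apply max_lt
    · exact lt_of_le_of_lt hdx (lt_of_lt_of_le hδltmin (min_le_right _ _))
    · exact lt_of_le_of_lt hdy (lt_of_lt_of_le hδltmin (min_le_right _ _))
  have hlipd := (lipschitzOnWith_iff_dist_le_mul.mp hlip) _ hmem1 _ hmem2
  have hdist12 : dist ((x, z) : (Fin n → ℝ) × (Fin m → ℝ)) (x, y) = dist z y := by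
    rw [Prod.dist_eq]
    simp [dist_self, max_eq_right dist_nonneg]
  rw [hdist12] at hlipd
  simp only at hlipd
  rw [Real.dist_eq] at hlipd
  have hFz : F x z ≤ F x y + (KF : ℝ) * (KH * u) := by
    have h1 : F x z - F x y ≤ (KF : ℝ) * dist z y := le_trans (le_abs_self _) hlipd
    have h2 : (KF : ℝ) * dist z y ≤ (KF : ℝ) * (KH * u) :=
      mul_le_mul_of_nonneg_left hdzy KF.coe_nonneg
    linarith
  rw [habs]
  have : (KF : ℝ) * (KH * u) ≤ ((KF : ℝ) * KH + 1) * u := by nlinarith [KF.coe_nonneg]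
  linarith
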